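/- For every a, b ∈ ℚ_p with a ≠ 0, the function G(a,b)Ω(|·|_p) equals x ↦ |a|_p^{-1/2}·𝟙{|x−b|_p ≤ |a|_p}. Consequently the orbit {G(a,b)(Ω(|·|_p)) : a, b ∈ ℚ_p, a ≠ 0} is exactly the set of functions {x ↦ p^{-γ/2} Ω(|p^γ x − n|_p) : γ ∈ ℤ, n ∈ R₀}, and these functions are pairwise distinct. -/

import Mathlib

open MeasureTheory

/-- Action of the `p`-adic affine group on complex-valued functions:
`(G(a,b)f)(x) = |a|_p^{-1/2} f((x-b)/a)`. -/
noncomputable def Gact (p : ℕ) [Fact p.Prime] (a b : ℚ_[p]) (f : ℚ_[p] → ℂ) : ℚ_[p] → ℂ :=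
  fun x => ((‖a‖ ^ (-(1/2) : ℝ) : ℝ) : ℂ) * f ((x - b) / a)

/-- `Ω(|x|_p)`: the indicator function of the unit ball `ℤ_p`. -/
noncomputable def Omega (p : ℕ) [Fact p.Prime] : ℚ_[p] → ℂ :=
  fun x => if ‖x‖ ≤ 1 then 1 else 0

/-- `R_σ`: the set of finite sums `∑_{l=-δ}^{σ-1} n_l p^l` with digits `n_l ∈ {0,…,p-1}`,
a complete set of representatives of `ℚ_p / p^σ ℤ_p`. -/
def Rset (p : ℕ) [Fact p.Prime] (σ : ℤ) : Set ℚ_[p] :=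
  { x | ∃ (δ : ℕ) (d : ℤ → ℕ), (∀ l, d l < p) ∧
      x = ∑ l ∈ Finset.Icc (-(δ : ℤ)) (σ - 1), (d l : ℚ_[p]) * (p : ℚ_[p]) ^ l }

section Helpers

lemma digitSum (p : ℕ) (hp : 1 < p) : ∀ δ m, m < p ^ δ →
    ∑ j ∈ Finset.range δ, m / p ^ j % p * p ^ j = m := by
  intro δ
  induction δ with
  | zero =>
    intro m hm
    simp only [pow_zero] at hm
    simp only [Finset.range_zero, Finset.sum_empty]
    omega
  | succ δ ih =>
    intro m hm
    have hp0 : 0 < p := by omega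
    rw [Finset.sum_range_succ']
    have key : ∀ j, m / p ^ (j + 1) % p * p ^ (j + 1) = m / p / p ^ j % p * p ^ j * p := by
      intro j
      rw [pow_succ', ← Nat.div_div_eq_div_mul]
      ring
    simp only [key]
    rw [← Finset.sum_mul]
    have hdiv : m / p < p ^ δ := by
      rw [Nat.div_lt_iff_lt_mul hp0]
      rw [pow_succ] at hm; exact hm
    rw [ih (m / p) hdiv]
    simp only [pow_zero, Nat.div_one, mul_one]
    rw [mul_comm]
    exact Nat.div_add_mod m p

lemma sumLt (p : ℕ) (hp : 1 < p) (c : ℕ → ℕ) (hc : ∀ j, c j < p) :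
    ∀ δ, ∑ j ∈ Finset.range δ, c j * p ^ j < p ^ δ := by
  intro δ
  induction δ with
  | zero => simp
  | succ δ ih =>
    rw [Finset.sum_range_succ, pow_succ]
    have h1 : c δ + 1 ≤ p := hc δ
    have hpow : 0 < p ^ δ := Nat.pow_pos (by omega)
    nlinarith

lemma sumIccEq (δ : ℕ) (M : Type*) [AddCommMonoid M] (f : ℤ → M) :
    ∑ l ∈ Finset.Icc (-(δ : ℤ)) (-1), f l = ∑ j ∈ Finset.range δ, f ((j : ℤ) - δ) := by
  refine Finset.sum_nbij' (fun l => (l + δ).toNat) (fun j => (j : ℤ) - δ) ?_ ?_ ?_ ?_ ?_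
  · intro a ha
    simp only [Finset.mem_Icc] at ha
    simp only [Finset.mem_range]
    omega
  · intro a ha
    simp only [Finset.mem_range] at ha
    simp only [Finset.mem_Icc]
    omega
  · intro a ha
    simp only [Finset.mem_Icc] at ha
    omega
  · intro a ha
    simp only [Finset.mem_range] at ha
    omega
  · intro a ha
    simp only [Finset.mem_Icc] at ha
    congr 1
    omega

lemma mem_Rset_zero_iff (p : ℕ) [Fact p.Prime] (n : ℚ_[p]) :
    n ∈ Rset p 0 ↔ ∃ δ m : ℕ, m < p ^ δ ∧ n = (m : ℚ_[p]) / (p : ℚ_[p]) ^ δ := by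
  have hp1 : 1 < p := (Fact.out : p.Prime).one_lt
  have hpne : (p : ℚ_[p]) ≠ 0 := Nat.cast_ne_zero.mpr (Fact.out : p.Prime).ne_zero
  have hIcc : ∀ δ : ℕ, Finset.Icc (-(δ : ℤ)) ((0 : ℤ) - 1) = Finset.Icc (-(δ : ℤ)) (-1) := by
    intro δ; norm_num
  constructor
  · rintro ⟨δ, d, hd, rfl⟩
    refine ⟨δ, ∑ j ∈ Finset.range δ, d ((j : ℤ) - δ) * p ^ j,
      sumLt p hp1 _ (fun j => hd _) δ, ?_⟩
    rw [hIcc, sumIccEq]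
    push_cast
    rw [Finset.sum_div]
    refine Finset.sum_congr rfl fun j _ => ?_
    rw [zpow_sub₀ hpne, zpow_natCast, zpow_natCast]
    ring
  · rintro ⟨δ, m, hm, rfl⟩
    refine ⟨δ, fun l => m / p ^ (l + δ).toNat % p, fun l => Nat.mod_lt _ (by omega), ?_⟩
    rw [hIcc, sumIccEq]
    have hled : ∀ j ∈ Finset.range δ,
        ((m / p ^ (((j : ℤ) - δ) + δ).toNat % p : ℕ) : ℚ_[p]) * (p : ℚ_[p]) ^ ((j : ℤ) - δ)
          = ((m / p ^ j % p : ℕ) : ℚ_[p]) * (p : ℚ_[p]) ^ (j : ℕ) / (p : ℚ_[p]) ^ δ := by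
      intro j _
      have h1 : (((j : ℤ) - δ) + δ).toNat = j := by omega
      rw [h1, zpow_sub₀ hpne, zpow_natCast, zpow_natCast]
      ring
    rw [Finset.sum_congr rfl hled, ← Finset.sum_div]
    congr 1
    conv_lhs => rw [← digitSum p hp1 δ m hm]
    push_cast
    rfl

lemma rep_exists (p : ℕ) [Fact p.Prime] (y : ℚ_[p]) :
    ∃ n ∈ Rset p 0, ‖y - n‖ ≤ 1 := by
  have hp1 : 1 < p := (Fact.out : p.Prime).one_lt
  have hpR : (1 : ℝ) < p := by exact_mod_cast hp1
  have hpR0 : (0 : ℝ) < p := by linarith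
  have hpne : (p : ℚ_[p]) ≠ 0 := Nat.cast_ne_zero.mpr (by omega)
  obtain ⟨δ, hδ⟩ : ∃ δ : ℕ, ‖y * (p : ℚ_[p]) ^ (δ : ℕ)‖ ≤ 1 := by
    rcases eq_or_ne y 0 with rfl | hy
    · exact ⟨0, by simp⟩
    · refine ⟨(-y.valuation).toNat, ?_⟩
      rw [norm_mul, Padic.norm_p_pow, Padic.norm_eq_zpow_neg_valuation hy,
        ← zpow_add₀ (ne_of_gt hpR0)]
      exact zpow_le_one_of_nonpos₀ (le_of_lt hpR) (by omega)
  set z : ℤ_[p] := ⟨y * (p : ℚ_[p]) ^ (δ : ℕ), hδ⟩ with hz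
  set m : ℕ := z.appr δ with hmdef
  have hm : m < p ^ δ := PadicInt.appr_lt z δ
  have hnorm : ‖z - (m : ℤ_[p])‖ ≤ (p : ℝ) ^ (-(δ : ℤ)) :=
    (PadicInt.norm_le_pow_iff_mem_span_pow _ _).2 (PadicInt.appr_spec δ z)
  have hnormQ : ‖y * (p : ℚ_[p]) ^ (δ : ℕ) - (m : ℚ_[p])‖ ≤ (p : ℝ) ^ (-(δ : ℤ)) := by
    have : ((z - (m : ℤ_[p]) : ℤ_[p]) : ℚ_[p]) = y * (p : ℚ_[p]) ^ (δ : ℕ) - (m : ℚ_[p]) := by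
      push_cast [hz]
      rfl
    rw [← this, PadicInt.padic_norm_e_of_padicInt]
    exact hnorm
  refine ⟨(m : ℚ_[p]) / (p : ℚ_[p]) ^ δ, (mem_Rset_zero_iff p _).2 ⟨δ, m, hm, rfl⟩, ?_⟩
  have heq : y - (m : ℚ_[p]) / (p : ℚ_[p]) ^ δ
      = (y * (p : ℚ_[p]) ^ (δ : ℕ) - (m : ℚ_[p])) / (p : ℚ_[p]) ^ δ := by
    field_simp
  rw [heq, norm_div, Padic.norm_p_pow]
  rw [div_le_one (zpow_pos hpR0 _)]
  exact hnormQ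

lemma rep_unique (p : ℕ) [Fact p.Prime] {n n' : ℚ_[p]} (hn : n ∈ Rset p 0)
    (hn' : n' ∈ Rset p 0) (h : ‖n - n'‖ ≤ 1) : n = n' := by
  have hp1 : 1 < p := (Fact.out : p.Prime).one_lt
  have hpR0 : (0 : ℝ) < p := by exact_mod_cast (by omega : 0 < p)
  have hpne : (p : ℚ_[p]) ≠ 0 := Nat.cast_ne_zero.mpr (by omega)
  obtain ⟨δ, m, hm, rfl⟩ := (mem_Rset_zero_iff p n).1 hn
  obtain ⟨δ', m', hm', rfl⟩ := (mem_Rset_zero_iff p n').1 hn'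
  set D : ℕ := δ + δ' with hD
  have hM : m * p ^ δ' < p ^ D := by
    rw [hD, pow_add]
    exact Nat.mul_lt_mul_of_lt_of_le hm le_rfl (Nat.pow_pos (by omega))
  have hM' : m' * p ^ δ < p ^ D := by
    rw [hD, Nat.add_comm, pow_add]
    exact Nat.mul_lt_mul_of_lt_of_le hm' le_rfl (Nat.pow_pos (by omega))
  have key : (m : ℚ_[p]) * (p : ℚ_[p]) ^ δ' - (m' : ℚ_[p]) * (p : ℚ_[p]) ^ δ
      = ((m : ℚ_[p]) / (p : ℚ_[p]) ^ δ - (m' : ℚ_[p]) / (p : ℚ_[p]) ^ δ') * (p : ℚ_[p]) ^ D := by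
    push_cast [hD, pow_add]
    field_simp
  have hnorm : ‖(((m * p ^ δ' : ℕ) : ℤ) - ((m' * p ^ δ : ℕ) : ℤ) : ℚ_[p])‖ ≤ (p : ℝ) ^ (-(D : ℤ)) := by
    push_cast
    rw [key, norm_mul, Padic.norm_p_pow]
    calc ‖_‖ * (p : ℝ) ^ (-(D : ℤ)) ≤ 1 * (p : ℝ) ^ (-(D : ℤ)) :=
      mul_le_mul_of_nonneg_right h (le_of_lt (zpow_pos hpR0 _))
    _ = (p : ℝ) ^ (-(D : ℤ)) := one_mul _
  have hdvd : ((p : ℤ) ^ D) ∣ ((m * p ^ δ' : ℕ) : ℤ) - ((m' * p ^ δ : ℕ) : ℤ) :=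
    (Padic.norm_int_le_pow_iff_dvd _ _).1 (by exact_mod_cast hnorm)
  have hzero : ((m * p ^ δ' : ℕ) : ℤ) - ((m' * p ^ δ : ℕ) : ℤ) = 0 := by
    refine Int.eq_zero_of_abs_lt_dvd hdvd ?_
    rw [abs_sub_lt_iff]
    have h1 : ((m : ℤ) * (p : ℤ) ^ δ') < (p : ℤ) ^ D := by exact_mod_cast hM
    have h2 : ((m' : ℤ) * (p : ℤ) ^ δ) < (p : ℤ) ^ D := by exact_mod_cast hM'
    have h3 : 0 ≤ (m' : ℤ) * (p : ℤ) ^ δ := by positivity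
    have h4 : 0 ≤ (m : ℤ) * (p : ℤ) ^ δ' := by positivity
    constructor <;> push_cast <;> linarith
  have hMM : m * p ^ δ' = m' * p ^ δ := by omega
  have hpow : (p : ℚ_[p]) ^ δ ≠ 0 := pow_ne_zero _ hpne
  have hpow' : (p : ℚ_[p]) ^ δ' ≠ 0 := pow_ne_zero _ hpne
  field_simp
  have := congrArg (Nat.cast : ℕ → ℚ_[p]) hMM
  push_cast at this
  linear_combination this

lemma ball_congr' (p : ℕ) [Fact p.Prime] {b c : ℚ_[p]} {r : ℝ} (hbc : ‖b - c‖ ≤ r) (x : ℚ_[p]) :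
    ‖x - b‖ ≤ r ↔ ‖x - c‖ ≤ r := by
  have hcb : ‖c - b‖ ≤ r := by rwa [← norm_neg, neg_sub]
  constructor <;> intro h
  · calc ‖x - c‖ = ‖(x - b) + (b - c)‖ := by congr 1; ring
      _ ≤ max ‖x - b‖ ‖b - c‖ := Padic.nonarchimedean _ _
      _ ≤ r := max_le h hbc
  · calc ‖x - b‖ = ‖(x - c) + (c - b)‖ := by congr 1; ring
      _ ≤ max ‖x - c‖ ‖c - b‖ := Padic.nonarchimedean _ _
      _ ≤ r := max_le h hcb

lemma gact_eq (p : ℕ) [Fact p.Prime] (a b : ℚ_[p]) (ha : a ≠ 0) :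
    Gact p a b (Omega p)
      = fun x => ((‖a‖ ^ (-(1/2) : ℝ) : ℝ) : ℂ) * (if ‖x - b‖ ≤ ‖a‖ then 1 else 0) := by
  funext x
  simp only [Gact, Omega]
  congr 1
  have hpos : (0 : ℝ) < ‖a‖ := norm_pos_iff.mpr ha
  simp only [norm_div, div_le_one hpos]

lemma coeff_eq (p : ℕ) [Fact p.Prime] (γ : ℤ) :
    ((p : ℝ) ^ (γ : ℤ)) ^ (-(1/2) : ℝ) = (p : ℝ) ^ (-(γ : ℝ) / 2) := by
  have hpR0 : (0 : ℝ) < p := by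
    exact_mod_cast (by have := (Fact.out : p.Prime).one_lt; omega : 0 < p)
  rw [← Real.rpow_intCast (p : ℝ) γ, ← Real.rpow_mul (le_of_lt hpR0)]
  congr 1
  ring

lemma gact_form (p : ℕ) [Fact p.Prime] (γ : ℤ) (n : ℚ_[p]) :
    Gact p ((p : ℚ_[p]) ^ (-γ)) ((p : ℚ_[p]) ^ (-γ) * n) (Omega p)
      = fun x => (((p : ℝ) ^ (-(γ : ℝ) / 2) : ℝ) : ℂ) * Omega p ((p : ℚ_[p]) ^ γ * x - n) := by
  have hpne : (p : ℚ_[p]) ≠ 0 := Nat.cast_ne_zero.mpr (Fact.out : p.Prime).ne_zero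
  have hu : (p : ℚ_[p]) ^ γ ≠ 0 := zpow_ne_zero _ hpne
  funext x
  simp only [Gact]
  have harg : (x - (p : ℚ_[p]) ^ (-γ) * n) / (p : ℚ_[p]) ^ (-γ)
      = (p : ℚ_[p]) ^ γ * x - n := by
    rw [zpow_neg]
    field_simp
  have hcoe : ‖(p : ℚ_[p]) ^ (-γ)‖ = (p : ℝ) ^ (γ : ℤ) := by
    rw [Padic.norm_p_zpow, neg_neg]
  rw [harg, hcoe, coeff_eq]

end Helpers

theorem stmt_0 (p : ℕ) [Fact p.Prime] :
    (∀ a b : ℚ_[p], a ≠ 0 →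
      Gact p a b (Omega p) =
        fun x => ((‖a‖ ^ (-(1/2) : ℝ) : ℝ) : ℂ) * (if ‖x - b‖ ≤ ‖a‖ then 1 else 0)) ∧
    ({g : ℚ_[p] → ℂ | ∃ a b : ℚ_[p], a ≠ 0 ∧ g = Gact p a b (Omega p)} =
      {g : ℚ_[p] → ℂ | ∃ γ : ℤ, ∃ n ∈ Rset p 0,
        g = fun x => (((p : ℝ) ^ (-(γ : ℝ) / 2) : ℝ) : ℂ) * Omega p ((p : ℚ_[p]) ^ γ * x - n)}) ∧
    (∀ γ γ' : ℤ, ∀ n n' : ℚ_[p], n ∈ Rset p 0 → n' ∈ Rset p 0 →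
      (fun x => (((p : ℝ) ^ (-(γ : ℝ) / 2) : ℝ) : ℂ) * Omega p ((p : ℚ_[p]) ^ γ * x - n)) =
      (fun x => (((p : ℝ) ^ (-(γ' : ℝ) / 2) : ℝ) : ℂ) * Omega p ((p : ℚ_[p]) ^ γ' * x - n')) →
      γ = γ' ∧ n = n') := by
  have hp1 : 1 < p := (Fact.out : p.Prime).one_lt
  have hpR : (1 : ℝ) < p := by exact_mod_cast hp1
  have hpR0 : (0 : ℝ) < p := by linarith
  have hpne : (p : ℚ_[p]) ≠ 0 := Nat.cast_ne_zero.mpr (by omega)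
  refine ⟨fun a b ha => gact_eq p a b ha, ?_, ?_⟩
  · ext g
    simp only [Set.mem_setOf_eq]
    constructor
    · rintro ⟨a, b, ha, rfl⟩
      set γ : ℤ := -a.valuation with hγ
      obtain ⟨n, hn, hrep⟩ := rep_exists p ((p : ℚ_[p]) ^ γ * b)
      refine ⟨γ, n, hn, ?_⟩
      rw [← gact_form p γ n]
      have ha' : (p : ℚ_[p]) ^ (-γ) ≠ 0 := zpow_ne_zero _ hpne
      have hnorm : ‖a‖ = ‖(p : ℚ_[p]) ^ (-γ)‖ := by
        rw [Padic.norm_p_zpow, neg_neg, Padic.norm_eq_zpow_neg_valuation ha]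
      have hb : ‖b - (p : ℚ_[p]) ^ (-γ) * n‖ ≤ ‖a‖ := by
        have : b - (p : ℚ_[p]) ^ (-γ) * n
            = (p : ℚ_[p]) ^ (-γ) * ((p : ℚ_[p]) ^ γ * b - n) := by
          rw [mul_sub, ← mul_assoc, ← zpow_add₀ hpne]
          simp
        rw [this, norm_mul, Padic.norm_p_zpow, neg_neg, hnorm,
          Padic.norm_p_zpow, neg_neg]
        calc (p : ℝ) ^ γ * ‖(p : ℚ_[p]) ^ γ * b - n‖ ≤ (p : ℝ) ^ γ * 1 :=
          mul_le_mul_of_nonneg_left hrep (le_of_lt (zpow_pos hpR0 _))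
        _ = (p : ℝ) ^ γ := mul_one _
      rw [gact_eq p a b ha, gact_eq p _ _ ha']
      funext x
      rw [← hnorm]
      congr 1
      exact if_congr (ball_congr' p hb x) rfl rfl
    · rintro ⟨γ, n, hn, rfl⟩
      exact ⟨(p : ℚ_[p]) ^ (-γ), (p : ℚ_[p]) ^ (-γ) * n, zpow_ne_zero _ hpne,
        (gact_form p γ n).symm⟩
  · intro γ γ' n n' hn hn' heq
    have hu : (p : ℚ_[p]) ^ γ ≠ 0 := zpow_ne_zero _ hpne
    set x₀ : ℚ_[p] := (p : ℚ_[p]) ^ (-γ) * n with hx₀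
    have hval : (p : ℚ_[p]) ^ γ * x₀ - n = 0 := by
      rw [hx₀, ← mul_assoc, ← zpow_add₀ hpne]
      simp
    have happ := congrFun heq x₀
    simp only [hval] at happ
    have hO0 : Omega p 0 = 1 := by simp [Omega]
    rw [hO0, mul_one] at happ
    have hcoeffpos : (0 : ℝ) < (p : ℝ) ^ (-(γ : ℝ) / 2) := Real.rpow_pos_of_pos hpR0 _
    have hcoeffpos' : (0 : ℝ) < (p : ℝ) ^ (-(γ' : ℝ) / 2) := Real.rpow_pos_of_pos hpR0 _
    -- Omega value at x₀ for the primed function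
    have hOval : Omega p ((p : ℚ_[p]) ^ γ' * x₀ - n') = 1 := by
      by_cases hc : ‖(p : ℚ_[p]) ^ γ' * x₀ - n'‖ ≤ 1
      · simp [Omega, hc]
      · exfalso
        have h0 : Omega p ((p : ℚ_[p]) ^ γ' * x₀ - n') = 0 := by simp [Omega, hc]
        rw [h0, mul_zero] at happ
        have hre : (p : ℝ) ^ (-(γ : ℝ) / 2) = 0 := by exact_mod_cast happ
        linarith
    rw [hOval, mul_one] at happ
    have hcoeff : (p : ℝ) ^ (-(γ : ℝ) / 2) = (p : ℝ) ^ (-(γ' : ℝ) / 2) := by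
      exact_mod_cast happ
    have hγγ : γ = γ' := by
      have h2 : -(γ : ℝ) / 2 = -(γ' : ℝ) / 2 := by
        by_contra hne
        rcases lt_or_gt_of_ne hne with hlt | hlt
        · exact absurd hcoeff (ne_of_lt ((Real.rpow_lt_rpow_left_iff hpR).2 hlt))
        · exact absurd hcoeff.symm (ne_of_lt ((Real.rpow_lt_rpow_left_iff hpR).2 hlt))
      have : (γ : ℝ) = (γ' : ℝ) := by linarith
      exact_mod_cast this
    subst hγγ
    refine ⟨rfl, ?_⟩
    -- from the indicator being 1 at x₀ : ‖n - n'‖ ≤ 1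
    have hnn' : ‖n - n'‖ ≤ 1 := by
      have h1 : (p : ℚ_[p]) ^ γ * x₀ - n' = n - n' := by
        rw [hx₀, ← mul_assoc, ← zpow_add₀ hpne]
        simp
      rw [h1] at hOval
      simp only [Omega] at hOval
      split at hOval
      · assumption
      · exact absurd hOval one_ne_zero.symm
    exact rep_unique p hn hn' hnn'
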